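/- Consider ẋ = f(x) with f(x,y) = (−2y, x²) on ℝ², domain H = ℝ², and initial set Ξ = {(x,y) : x + y ≥ 0}. The set P = {(x,y) : x ≥ −1 ∨ y > −1/2} is a continuous invariant of (H, f, Ξ): Ξ ⊆ P, and every forward trajectory starting in P remains in P. -/
import Mathlib


/-- For the system `ẋ = -2y, ẏ = x²` on `ℝ²` with domain `H = ℝ²` and initial set
`Ξ = {(x,y) | x + y ≥ 0}`, the set `P = {(x,y) | x ≥ -1 ∨ y > -1/2}` is a
continuous invariant: `Ξ ⊆ P` and every forward trajectory starting in `P`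
remains in `P`. -/
theorem sai_example_union_open_closed :
    (∀ x₀ y₀ : ℝ, x₀ + y₀ ≥ 0 → (x₀ ≥ -1 ∨ y₀ > -(1/2 : ℝ))) ∧
    ∀ (x y : ℝ → ℝ),
      (∀ t : ℝ, HasDerivAt x (-2 * y t) t) →
      (∀ t : ℝ, HasDerivAt y ((x t) ^ 2) t) →
      (x 0 ≥ -1 ∨ y 0 > -(1/2 : ℝ)) →
      ∀ t : ℝ, 0 ≤ t → (x t ≥ -1 ∨ y t > -(1/2 : ℝ)) := by
  constructor
  · intro x₀ y₀ h
    by_cases hy : y₀ > -(1/2 : ℝ)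
    · exact Or.inr hy
    · exact Or.inl (by push_neg at hy; linarith)
  · intro x y hx hy h0 t ht
    by_contra hP
    push_neg at hP
    obtain ⟨hxt, hyt⟩ := hP
    have hcx : Continuous x := continuous_iff_continuousAt.mpr fun s => (hx s).continuousAt
    have hcy : Continuous y := continuous_iff_continuousAt.mpr fun s => (hy s).continuousAt
    set S : Set ℝ := {s | s ∈ Set.Icc 0 t ∧ (x s ≥ -1 ∨ y s > -(1/2 : ℝ))} with hSdef
    have h0S : (0 : ℝ) ∈ S := ⟨⟨le_refl 0, ht⟩, h0⟩
    have hne : S.Nonempty := ⟨0, h0S⟩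
    have hbdd : BddAbove S := ⟨t, fun s hs => hs.1.2⟩
    set u := sSup S with hu
    have hu0 : 0 ≤ u := le_csSup hbdd h0S
    have hut : u ≤ t := csSup_le hne fun s hs => hs.1.2
    -- the trajectory is in Q = {x < -1 ∧ y ≤ -1/2} on (u, t]
    have hQ : ∀ s, u < s → s ≤ t → x s < -1 ∧ y s ≤ -(1/2 : ℝ) := by
      intro s hus hst
      by_contra hc
      push_neg at hc
      have hsS : s ∈ S := by
        refine ⟨⟨le_trans hu0 hus.le, hst⟩, ?_⟩
        by_cases h1 : x s ≥ -1
        · exact Or.inl h1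
        · exact Or.inr (hc (by push_neg at h1; exact h1))
      exact absurd (le_csSup hbdd hsS) (not_le.mpr hus)
    -- Q holds at u
    have hQu : x u < -1 ∧ y u ≤ -(1/2 : ℝ) := by
      rcases eq_or_lt_of_le hut with h | h
      · rw [h]; exact ⟨hxt, hyt⟩
      · have hyu : y u ≤ -(1/2 : ℝ) := by
          have htend : Filter.Tendsto y (nhdsWithin u (Set.Ioi u)) (nhds (y u)) :=
            (hcy.tendsto u).mono_left nhdsWithin_le_nhds
          refine le_of_tendsto htend ?_
          filter_upwards [Ioo_mem_nhdsGT_of_mem ⟨le_refl u, h⟩] with s hs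
          exact (hQ s hs.1 hs.2.le).2
        have hmono : StrictMonoOn x (Set.Icc u t) := by
          apply strictMonoOn_of_deriv_pos (convex_Icc u t) hcx.continuousOn
          intro s hs
          rw [interior_Icc] at hs
          rw [(hx s).deriv]
          have := (hQ s hs.1 hs.2.le).2
          linarith
        have hlt := hmono ⟨le_refl u, hut⟩ ⟨hut, le_refl t⟩ h
        exact ⟨by linarith, hyu⟩
    -- u ∉ S
    have huS : u ∉ S := by
      intro hus
      rcases hus.2 with h1 | h1
      · linarith [hQu.1]
      · linarith [hQu.2]
    -- local contradiction just below u
    have hxpos : 0 < (x u) ^ 2 := by nlinarith [hQu.1]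
    have hslope : Filter.Tendsto (slope y u) (nhdsWithin u {u}ᶜ) (nhds ((x u) ^ 2)) :=
      hasDerivAt_iff_tendsto_slope.mp (hy u)
    have ev2 : ∀ᶠ s in nhdsWithin u (Set.Iio u), 0 < slope y u s :=
      (hslope.eventually (eventually_gt_nhds hxpos)).filter_mono
        (nhdsWithin_mono u fun s hs => ne_of_lt hs)
    have ev1 : ∀ᶠ s in nhdsWithin u (Set.Iio u), x s < -1 :=
      (((hcx.tendsto u).eventually (eventually_lt_nhds hQu.1)).filter_mono
        (nhdsWithin_le_nhds))
    obtain ⟨l, hl, hsub⟩ := mem_nhdsLT_iff_exists_Ioo_subset.mp (ev1.and ev2)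
    obtain ⟨s, hsS, hls⟩ := exists_lt_of_lt_csSup hne (show l < sSup S from hl)
    have hsu : s ≤ u := le_csSup hbdd hsS
    have hsu' : s < u := lt_of_le_of_ne hsu (fun h => huS (h ▸ hsS))
    have hmem := hsub ⟨hls, hsu'⟩
    have hslope' : 0 < (y s - y u) / (s - u) := by
      have := hmem.2
      rwa [slope_def_field] at this
    have hys : y s < y u := by
      rcases div_pos_iff.mp hslope' with ⟨_, h2⟩ | ⟨h1, _⟩
      · linarith
      · linarith
    rcases hsS.2 with h1 | h1
    · linarith [hmem.1]
    · linarith [hQu.2]
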